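/- Let C > 0 and suppose e^{u²} − C u² > 0 on an open interval D. Then g(u) = ∫_{u₀}^u √(e^{τ²}/(e^{τ²} − C τ²)) dτ (with u₀ ∈ D) satisfies the ODE u·g''(u) + g'(u)(1 − g'(u)²) + u²·g'(u)(g'(u)² − 1) = 0 for all u ∈ D. -/

import Mathlib

theorem stmt7 (C : ℝ) (hC : 0 < C) (a b u₀ : ℝ) (hu₀ : u₀ ∈ Set.Ioo a b)
    (hpos : ∀ u ∈ Set.Ioo a b, Real.exp (u ^ 2) - C * u ^ 2 > 0)
    (g : ℝ → ℝ)
    (hg : g = fun u : ℝ =>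
      ∫ τ in u₀..u, Real.sqrt (Real.exp (τ ^ 2) / (Real.exp (τ ^ 2) - C * τ ^ 2))) :
    ∀ u ∈ Set.Ioo a b,
      u * deriv (deriv g) u + deriv g u * (1 - (deriv g u) ^ 2) +
        u ^ 2 * deriv g u * ((deriv g u) ^ 2 - 1) = 0 := by
  set φ : ℝ → ℝ := fun τ => Real.sqrt (Real.exp (τ ^ 2) / (Real.exp (τ ^ 2) - C * τ ^ 2))
    with hφ
  have hcont : ContinuousOn φ (Set.Ioo a b) := by
    apply Continuous.comp_continuousOn Real.continuous_sqrt
    exact ContinuousOn.div (by fun_prop) (by fun_prop)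
      (fun x hx => ne_of_gt (hpos x hx))
  -- g' = φ on Ioo a b
  have hder : ∀ v ∈ Set.Ioo a b, HasDerivAt g (φ v) v := by
    intro v hv
    rw [hg]
    apply intervalIntegral.integral_hasDerivAt_right
    · apply (hcont.mono _).intervalIntegrable
      exact Set.OrdConnected.uIcc_subset Set.ordConnected_Ioo hu₀ hv
    · exact hcont.stronglyMeasurableAtFilter isOpen_Ioo v hv
    · exact hcont.continuousAt (isOpen_Ioo.mem_nhds hv)
  intro u hu
  have hd : Real.exp (u ^ 2) - C * u ^ 2 > 0 := hpos u hu
  have hE : (0:ℝ) < Real.exp (u ^ 2) := Real.exp_pos _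
  have hdiv_pos : 0 < Real.exp (u ^ 2) / (Real.exp (u ^ 2) - C * u ^ 2) := div_pos hE hd
  -- deriv g = φ in a neighborhood of u
  have hev : deriv g =ᶠ[nhds u] φ := by
    filter_upwards [isOpen_Ioo.mem_nhds hu] with v hv
    exact (hder v hv).deriv
  have hg1 : deriv g u = φ u := (hder u hu).deriv
  -- derivative of φ at u
  have hden : HasDerivAt (fun τ : ℝ => Real.exp (τ ^ 2) - C * τ ^ 2)
      (Real.exp (u ^ 2) * (2 * u) - C * (2 * u)) u := by
    have h2 : HasDerivAt (fun τ : ℝ => τ ^ 2) (2 * u) u := by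
      simpa using hasDerivAt_pow 2 u
    exact (h2.exp).sub (h2.const_mul C)
  have hnum : HasDerivAt (fun τ : ℝ => Real.exp (τ ^ 2)) (Real.exp (u ^ 2) * (2 * u)) u := by
    have h2 : HasDerivAt (fun τ : ℝ => τ ^ 2) (2 * u) u := by
      simpa using hasDerivAt_pow 2 u
    exact h2.exp
  have hdivd : HasDerivAt (fun τ : ℝ => Real.exp (τ ^ 2) / (Real.exp (τ ^ 2) - C * τ ^ 2))
      ((Real.exp (u ^ 2) * (2 * u) * (Real.exp (u ^ 2) - C * u ^ 2)
        - Real.exp (u ^ 2) * (Real.exp (u ^ 2) * (2 * u) - C * (2 * u)))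
        / (Real.exp (u ^ 2) - C * u ^ 2) ^ 2) u :=
    hnum.div hden (ne_of_gt hd)
  have hφder : HasDerivAt φ
      (((Real.exp (u ^ 2) * (2 * u) * (Real.exp (u ^ 2) - C * u ^ 2)
        - Real.exp (u ^ 2) * (Real.exp (u ^ 2) * (2 * u) - C * (2 * u)))
        / (Real.exp (u ^ 2) - C * u ^ 2) ^ 2)
        / (2 * Real.sqrt (Real.exp (u ^ 2) / (Real.exp (u ^ 2) - C * u ^ 2)))) u :=
    hdivd.sqrt (ne_of_gt hdiv_pos)
  have hg2 : deriv (deriv g) u = deriv φ u := hev.deriv_eq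
  rw [hg2, hφder.deriv, hg1]
  set s := Real.sqrt (Real.exp (u ^ 2) / (Real.exp (u ^ 2) - C * u ^ 2)) with hs
  have hs_pos : 0 < s := Real.sqrt_pos.mpr hdiv_pos
  have hs2 : s ^ 2 = Real.exp (u ^ 2) / (Real.exp (u ^ 2) - C * u ^ 2) :=
    Real.sq_sqrt (le_of_lt hdiv_pos)
  have hs2' : s ^ 2 * (Real.exp (u ^ 2) - C * u ^ 2) = Real.exp (u ^ 2) := by
    rw [hs2]; exact div_mul_cancel₀ _ (ne_of_gt hd)
  show u * _ + φ u * (1 - (φ u) ^ 2) + u ^ 2 * φ u * ((φ u) ^ 2 - 1) = 0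
  have hφu : φ u = s := rfl
  rw [hφu]
  set E := Real.exp (u ^ 2) with hE'
  set d := E - C * u ^ 2 with hd'
  have hd0 : d ≠ 0 := ne_of_gt hd
  have hs0 : s ≠ 0 := ne_of_gt hs_pos
  field_simp
  linear_combination ((u^2-1)*(s^2*(E - C*u^2) + E - (E - C*u^2))) * (hs2' : s ^ 2 * (E - C * u ^ 2) = E)
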